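/- arXiv:2412.05519 — 5 statements merged into one kernel-verified Lean document; each statement's English description precedes it below -/
import Mathlib

section
/- Let ℐ be an object ideal of an additive category 𝒜. Then ℐ is precovering if and only if Ob(ℐ) is precovering. -/
open CategoryTheory Limits

universe v u

variable (C : Type u) [Category.{v} C] [Preadditive C] [HasFiniteBiproducts C]

/-- An ideal of an additive category: an additive subgroup of each Hom-group,
closed under composition with arbitrary morphisms on both sides. -/
structure CatIdeal where
  carrier : ∀ (A B : C), AddSubgroup (A ⟶ B)
  comp_mem : ∀ ⦃X A B Y : C⦄ (h : X ⟶ A) (g : A ⟶ B) (f : B ⟶ Y),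
    g ∈ carrier A B → h ≫ g ≫ f ∈ carrier X Y

variable {C}

/-- The objects of an ideal: those objects whose identity morphism belongs to the ideal. -/
def CatIdeal.Ob (I : CatIdeal C) : Set C := {A | 𝟙 A ∈ I.carrier A A}

/-- An ideal is an object ideal if every morphism in it factors through one of its objects. -/
def CatIdeal.IsObjectIdeal (I : CatIdeal C) : Prop :=
  ∀ ⦃A B : C⦄, ∀ g ∈ I.carrier A B,
    ∃ (X : C) (u : A ⟶ X) (v : X ⟶ B), X ∈ I.Ob ∧ u ≫ v = g

/-- `f : X ⟶ A` is an `I`-precover of `A`. -/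
def CatIdeal.IsPrecover (I : CatIdeal C) {X A : C} (f : X ⟶ A) : Prop :=
  f ∈ I.carrier X A ∧
    ∀ ⦃X' : C⦄ (f' : X' ⟶ A), f' ∈ I.carrier X' A → ∃ g : X' ⟶ X, g ≫ f = f'

/-- `f : X ⟶ A` is an `I`-cover of `A`. -/
def CatIdeal.IsCover (I : CatIdeal C) {X A : C} (f : X ⟶ A) : Prop :=
  I.IsPrecover f ∧ ∀ g : X ⟶ X, g ≫ f = f → IsIso g

/-- `f : A ⟶ X` is an `I`-preenvelope of `A`. -/
def CatIdeal.IsPreenvelope (I : CatIdeal C) {A X : C} (f : A ⟶ X) : Prop :=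
  f ∈ I.carrier A X ∧
    ∀ ⦃X' : C⦄ (f' : A ⟶ X'), f' ∈ I.carrier A X' → ∃ g : X ⟶ X', f ≫ g = f'

/-- `f : A ⟶ X` is an `I`-envelope of `A`. -/
def CatIdeal.IsEnvelope (I : CatIdeal C) {A X : C} (f : A ⟶ X) : Prop :=
  I.IsPreenvelope f ∧ ∀ g : X ⟶ X, f ≫ g = f → IsIso g

def CatIdeal.Precovering (I : CatIdeal C) : Prop :=
  ∀ A : C, ∃ (X : C) (f : X ⟶ A), I.IsPrecover f

def CatIdeal.Covering (I : CatIdeal C) : Prop :=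
  ∀ A : C, ∃ (X : C) (f : X ⟶ A), I.IsCover f

def CatIdeal.Preenveloping (I : CatIdeal C) : Prop :=
  ∀ A : C, ∃ (X : C) (f : A ⟶ X), I.IsPreenvelope f

def CatIdeal.Enveloping (I : CatIdeal C) : Prop :=
  ∀ A : C, ∃ (X : C) (f : A ⟶ X), I.IsEnvelope f

/-- `f : X ⟶ A` is an `𝒳`-precover of `A`, for a class of objects `𝒳`. -/
def Set.IsClassPrecover (𝒳 : Set C) {X A : C} (f : X ⟶ A) : Prop :=
  X ∈ 𝒳 ∧ ∀ ⦃X' : C⦄, X' ∈ 𝒳 → ∀ f' : X' ⟶ A, ∃ g : X' ⟶ X, g ≫ f = f'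

def Set.IsClassCover (𝒳 : Set C) {X A : C} (f : X ⟶ A) : Prop :=
  𝒳.IsClassPrecover f ∧ ∀ g : X ⟶ X, g ≫ f = f → IsIso g

/-- `f : A ⟶ X` is an `𝒳`-preenvelope of `A`, for a class of objects `𝒳`. -/
def Set.IsClassPreenvelope (𝒳 : Set C) {A X : C} (f : A ⟶ X) : Prop :=
  X ∈ 𝒳 ∧ ∀ ⦃X' : C⦄, X' ∈ 𝒳 → ∀ f' : A ⟶ X', ∃ g : X ⟶ X', f ≫ g = f'

def Set.IsClassEnvelope (𝒳 : Set C) {A X : C} (f : A ⟶ X) : Prop :=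
  𝒳.IsClassPreenvelope f ∧ ∀ g : X ⟶ X, f ≫ g = f → IsIso g

def Set.ClassPrecovering (𝒳 : Set C) : Prop :=
  ∀ A : C, ∃ (X : C) (f : X ⟶ A), 𝒳.IsClassPrecover f

def Set.ClassCovering (𝒳 : Set C) : Prop :=
  ∀ A : C, ∃ (X : C) (f : X ⟶ A), 𝒳.IsClassCover f

def Set.ClassPreenveloping (𝒳 : Set C) : Prop :=
  ∀ A : C, ∃ (X : C) (f : A ⟶ X), 𝒳.IsClassPreenvelope f

def Set.ClassEnveloping (𝒳 : Set C) : Prop :=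
  ∀ A : C, ∃ (X : C) (f : A ⟶ X), 𝒳.IsClassEnvelope f

/-- an object ideal is precovering iff its class of objects is precovering. -/
theorem precovering_iff_ob_precovering (I : CatIdeal C) (hI : I.IsObjectIdeal) :
    I.Precovering ↔ I.Ob.ClassPrecovering := by
  constructor
  · intro h A
    obtain ⟨X, f, hf, hfac⟩ := h A
    obtain ⟨Y, u, v, hY, huv⟩ := hI f hf
    refine ⟨Y, v, hY, ?_⟩
    intro X' hX' f'
    have hf' : f' ∈ I.carrier X' A := by
      simpa using I.comp_mem (𝟙 X') (𝟙 X') f' hX'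
    obtain ⟨g, hg⟩ := hfac f' hf'
    exact ⟨g ≫ u, by rw [Category.assoc, huv, hg]⟩
  · intro h A
    obtain ⟨X, f, hX, hfac⟩ := h A
    refine ⟨X, f, ?_, ?_⟩
    · simpa using I.comp_mem (𝟙 X) (𝟙 X) f hX
    · intro X' f' hf'
      obtain ⟨Y, u, v, hY, huv⟩ := hI f' hf'
      obtain ⟨g, hg⟩ := hfac hY v
      exact ⟨u ≫ g, by rw [Category.assoc, hg, huv]⟩
end

section
/- Let ℐ be an object ideal of an additive category 𝒜. Then ℐ is preenveloping if and only if Ob(ℐ) is preenveloping. -/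
open CategoryTheory Limits

universe v u

variable (C : Type u) [Category.{v} C] [Preadditive C] [HasFiniteBiproducts C]

variable {C}

/-- an object ideal is preenveloping iff its class of objects is preenveloping. -/
theorem preenveloping_iff_ob_preenveloping (I : CatIdeal C) (hI : I.IsObjectIdeal) :
    I.Preenveloping ↔ I.Ob.ClassPreenveloping := by
  constructor
  · intro h A
    obtain ⟨X, f, hf, hfac⟩ := h A
    obtain ⟨Y, u, v, hY, huv⟩ := hI f hf
    refine ⟨Y, u, hY, ?_⟩
    intro X' hX' f'
    have hf' : f' ∈ I.carrier A X' := by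
      simpa using I.comp_mem f' (𝟙 X') (𝟙 X') hX'
    obtain ⟨g, hg⟩ := hfac f' hf'
    exact ⟨v ≫ g, by rw [← Category.assoc, huv, hg]⟩
  · intro h A
    obtain ⟨Y, e, hY, hfac⟩ := h A
    refine ⟨Y, e, ?_, ?_⟩
    · simpa using I.comp_mem e (𝟙 Y) (𝟙 Y) hY
    · intro X' f' hf'
      obtain ⟨Z, u, v, hZ, huv⟩ := hI f' hf'
      obtain ⟨g, hg⟩ := hfac hZ u
      exact ⟨g ≫ v, by rw [← Category.assoc, hg, huv]⟩
end

section
/- Let ℐ be an object ideal of an additive category 𝒜. Then ℐ is covering if and only if Ob(ℐ) is covering. Moreover, in the 'only if' direction, the domain of any ℐ-cover of an object A belongs to Ob(ℐ). -/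
open CategoryTheory Limits

universe v u

variable (C : Type u) [Category.{v} C] [Preadditive C] [HasFiniteBiproducts C]

variable {C}

/-- an object ideal is covering iff its class of objects is covering;
moreover, if `I` is covering then the domain of any `I`-cover lies in `Ob(I)`. -/
theorem covering_iff_ob_covering (I : CatIdeal C) (hI : I.IsObjectIdeal) :
    (I.Covering ↔ I.Ob.ClassCovering) ∧
      (I.Covering → ∀ ⦃X A : C⦄ (f : X ⟶ A), I.IsCover f → X ∈ I.Ob) := by
  have mem_of_ob : ∀ {Y B : C} (v : Y ⟶ B), Y ∈ I.Ob → v ∈ I.carrier Y B := by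
    intro Y B v hY
    simpa using I.comp_mem (𝟙 Y) (𝟙 Y) v hY
  have dom : ∀ ⦃X A : C⦄ (f : X ⟶ A), I.IsCover f → X ∈ I.Ob := by
    intro X A f hf
    obtain ⟨Y, u, v, hY, huv⟩ := hI f hf.1.1
    obtain ⟨g, hg⟩ := hf.1.2 v (mem_of_ob v hY)
    have hiso : IsIso (u ≫ g) := hf.2 (u ≫ g) (by rw [Category.assoc, hg, huv])
    have heq : 𝟙 X = (inv (u ≫ g) ≫ u) ≫ 𝟙 Y ≫ g := by simp
    rw [CatIdeal.Ob, Set.mem_setOf_eq, heq]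
    exact I.comp_mem (inv (u ≫ g) ≫ u) (𝟙 Y) g hY
  refine ⟨⟨?_, ?_⟩, fun _ => dom⟩
  · intro h A
    obtain ⟨X, f, hf⟩ := h A
    refine ⟨X, f, ⟨dom f hf, ?_⟩, hf.2⟩
    intro X' hX' f'
    exact hf.1.2 f' (mem_of_ob f' hX')
  · intro h A
    obtain ⟨X, f, hf⟩ := h A
    refine ⟨X, f, ⟨mem_of_ob f hf.1.1, ?_⟩, hf.2⟩
    intro X' f' hf'
    obtain ⟨Y, u, v, hY, huv⟩ := hI f' hf'
    obtain ⟨g, hg⟩ := hf.1.2 hY v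
    exact ⟨u ≫ g, by rw [Category.assoc, hg, huv]⟩
end

section
/- Let ℐ be an object ideal of an additive category 𝒜. Then ℐ is enveloping if and only if Ob(ℐ) is enveloping. Moreover, in the 'only if' direction, the codomain of any ℐ-envelope of an object A belongs to Ob(ℐ). -/
open CategoryTheory Limits

universe v u

variable (C : Type u) [Category.{v} C] [Preadditive C] [HasFiniteBiproducts C]

variable {C}

/-- an object ideal is enveloping iff its class of objects is enveloping;
moreover, if `I` is enveloping then the codomain of any `I`-envelope lies in `Ob(I)`. -/
theorem enveloping_iff_ob_enveloping (I : CatIdeal C) (hI : I.IsObjectIdeal) :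
    (I.Enveloping ↔ I.Ob.ClassEnveloping) ∧
      (I.Enveloping → ∀ ⦃A X : C⦄ (f : A ⟶ X), I.IsEnvelope f → X ∈ I.Ob) := by
  -- any morphism into an object of Ob(I) is in I
  have mem_ob : ∀ {A X : C}, X ∈ I.Ob → ∀ f : A ⟶ X, f ∈ I.carrier A X := by
    intro A X hX f
    simpa using I.comp_mem f (𝟙 X) (𝟙 X) hX
  -- the codomain of any I-envelope lies in Ob(I)
  have cod_ob : ∀ ⦃A X : C⦄ (f : A ⟶ X), I.IsEnvelope f → X ∈ I.Ob := by
    intro A X f hf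
    obtain ⟨Y, u, v, hY, huv⟩ := hI f hf.1.1
    obtain ⟨g, hg⟩ := hf.1.2 u (mem_ob hY u)
    have hiso : IsIso (g ≫ v) := hf.2 (g ≫ v) (by rw [← Category.assoc, hg, huv])
    have : 𝟙 X = g ≫ (v ≫ inv (g ≫ v)) := by
      rw [← Category.assoc, IsIso.hom_inv_id]
    rw [CatIdeal.Ob, Set.mem_setOf_eq, this]
    simpa using I.comp_mem g (𝟙 Y) (v ≫ inv (g ≫ v)) hY
  refine ⟨⟨?_, ?_⟩, fun _ => cod_ob⟩
  · intro h A
    obtain ⟨X, f, hf⟩ := h A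
    have hX : X ∈ I.Ob := cod_ob f hf
    refine ⟨X, f, ⟨hX, fun X' hX' f' => hf.1.2 f' (mem_ob hX' f')⟩, hf.2⟩
  · intro h A
    obtain ⟨X, f, hf⟩ := h A
    refine ⟨X, f, ⟨mem_ob hf.1.1 f, fun X' f' hf' => ?_⟩, hf.2⟩
    obtain ⟨Y, u, v, hY, huv⟩ := hI f' hf'
    obtain ⟨g, hg⟩ := hf.1.2 hY u
    exact ⟨g ≫ v, by rw [← Category.assoc, hg, huv]⟩
end

section
/- Let R be an associative unital ring and 𝒳 a class of left R-modules closed under isomorphisms. If 𝒳 is enveloping, then 𝒳 is closed under direct summands: whenever M ∈ 𝒳 and N is a direct summand of M, then N ∈ 𝒳. -/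
open CategoryTheory Limits

universe u

variable {R : Type u} [Ring R]

/-- `f : M ⟶ X` is an `𝒳`-preenvelope of `M`, for a class of modules `𝒳`. -/
def IsClassPreenvelope (𝒳 : Set (ModuleCat.{u} R)) {M X : ModuleCat.{u} R} (f : M ⟶ X) : Prop :=
  X ∈ 𝒳 ∧ ∀ ⦃X' : ModuleCat.{u} R⦄, X' ∈ 𝒳 → ∀ f' : M ⟶ X', ∃ g : X ⟶ X', f ≫ g = f'

/-- `f : M ⟶ X` is an `𝒳`-envelope of `M`. -/
def IsClassEnvelope (𝒳 : Set (ModuleCat.{u} R)) {M X : ModuleCat.{u} R} (f : M ⟶ X) : Prop :=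
  IsClassPreenvelope 𝒳 f ∧ ∀ g : X ⟶ X, f ≫ g = f → IsIso g

/-- `𝒳` is enveloping: every module has an `𝒳`-envelope. -/
def ClassEnveloping (𝒳 : Set (ModuleCat.{u} R)) : Prop :=
  ∀ M : ModuleCat.{u} R, ∃ (X : ModuleCat.{u} R) (f : M ⟶ X), IsClassEnvelope 𝒳 f

/-- an enveloping class of left `R`-modules closed under isomorphisms is
closed under direct summands. -/
theorem enveloping_class_closed_under_direct_summands (𝒳 : Set (ModuleCat.{u} R))
    (hiso : ∀ ⦃M N : ModuleCat.{u} R⦄, (M ≅ N) → M ∈ 𝒳 → N ∈ 𝒳)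
    (henv : ClassEnveloping 𝒳) :
    ∀ ⦃M N : ModuleCat.{u} R⦄, M ∈ 𝒳 →
      (∃ (i : N ⟶ M) (p : M ⟶ N), i ≫ p = 𝟙 N) → N ∈ 𝒳 := by
  rintro M N hM ⟨i, p, hip⟩
  obtain ⟨X, f, ⟨⟨hX, hpre⟩, hmin⟩⟩ := henv N
  obtain ⟨g, hg⟩ := hpre hM i
  have key : f ≫ (g ≫ p) = 𝟙 N := by rw [← Category.assoc, hg, hip]
  have hII : IsIso ((g ≫ p) ≫ f) := by
    apply hmin
    rw [← Category.assoc, key, Category.id_comp]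
  have hmono : Mono f := ⟨fun u v huv => by
    have := congrArg (· ≫ (g ≫ p)) huv
    simpa [Category.assoc, key] using this⟩
  have hepi : Epi f := by
    have : Epi ((g ≫ p) ≫ f) := IsIso.epi_of_iso _
    exact epi_of_epi (g ≫ p) f
  have : IsIso f := isIso_of_mono_of_epi f
  exact hiso (asIso f).symm hX
end
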